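/- For all x ≥ 0, the standard normal tail satisfies (1/(√(2π)(1+x))) e^{−x²/2} ≤ 1 − Φ(x) ≤ (1/(√π(1+x))) e^{−x²/2}, where Φ is the standard normal CDF. -/

import Mathlib

open MeasureTheory

/-- The standard normal cumulative distribution function. -/
noncomputable def stdNormalCDF (x : ℝ) : ℝ :=
  ∫ t in Set.Iic x, Real.exp (-t ^ 2 / 2) / Real.sqrt (2 * Real.pi)

namespace StdNormalTail

open Set Real

lemma intG : Integrable (fun t : ℝ => Real.exp (-t ^ 2 / 2)) := by
  have h := integrable_exp_neg_mul_sq (by norm_num : (0:ℝ) < 1/2)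
  convert h using 2 with t; ring_nf

lemma intG1 : Integrable (fun t : ℝ => Real.exp (-t ^ 2)) := by
  have h := integrable_exp_neg_mul_sq (by norm_num : (0:ℝ) < 1)
  convert h using 2 with t; ring_nf

lemma intOn_exp_neg_mul (a : ℝ) {b : ℝ} (hb : 0 < b) :
    IntegrableOn (fun s : ℝ => Real.exp (-(b * s))) (Set.Ioi a) := by
  simpa [neg_mul] using exp_neg_integrableOn_Ioi a hb

lemma int_exp_neg_mul {b : ℝ} (hb : 0 < b) :
    ∫ s in Set.Ioi (0:ℝ), Real.exp (-(b * s)) = 1 / b := by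
  have h := integral_comp_mul_left_Ioi (fun u : ℝ => Real.exp (-u)) 0 hb
  simp only [mul_zero] at h
  rw [h, integral_exp_neg_Ioi]
  simp [one_div]

lemma gauss_half : ∫ s in Set.Ioi (0:ℝ), Real.exp (-s ^ 2 / 2) = Real.sqrt (2 * Real.pi) / 2 := by
  have h := integral_gaussian_Ioi (1/2)
  have e1 : (fun s : ℝ => Real.exp (-s ^ 2 / 2)) = fun s : ℝ => Real.exp (-(1/2) * s ^ 2) := by
    funext s; congr 1; ring
  rw [show Real.pi / (1/2) = 2 * Real.pi by ring] at h
  rw [e1]; exact h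

lemma gauss_total : ∫ s : ℝ, Real.exp (-s ^ 2 / 2) = Real.sqrt (2 * Real.pi) := by
  have h := integral_gaussian (1/2)
  have e1 : (fun s : ℝ => Real.exp (-s ^ 2 / 2)) = fun s : ℝ => Real.exp (-(1/2) * s ^ 2) := by
    funext s; congr 1; ring
  rw [show Real.pi / (1/2) = 2 * Real.pi by ring] at h
  rw [e1]; exact h

lemma gauss_one : ∫ s in Set.Ioi (0:ℝ), Real.exp (-s ^ 2) = Real.sqrt Real.pi / 2 := by
  have h := integral_gaussian_Ioi 1
  simpa using h

lemma shift_Ioi (x : ℝ) (f : ℝ → ℝ) :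
    ∫ t in Set.Ioi x, f t = ∫ s in Set.Ioi (0:ℝ), f (s + x) := by
  classical
  rw [← integral_indicator measurableSet_Ioi, ← integral_indicator measurableSet_Ioi,
    ← integral_add_right_eq_self (fun t => (Set.Ioi x).indicator f t) x]
  congr 1
  funext s
  by_cases h : 0 < s
  · simp [Set.indicator_apply, Set.mem_Ioi, lt_add_iff_pos_left, h]
  · simp [Set.indicator_apply, Set.mem_Ioi, lt_add_iff_pos_left, h]

lemma T_eq (x : ℝ) :
    ∫ t in Set.Ioi x, Real.exp (-t ^ 2 / 2)
      = Real.exp (-x ^ 2 / 2) * ∫ s in Set.Ioi (0:ℝ), Real.exp (-(x * s) - s ^ 2 / 2) := by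
  rw [shift_Ioi x, ← integral_const_mul]
  congr 1; funext s
  rw [← Real.exp_add]; congr 1; ring

lemma J_int {x : ℝ} (hx : 0 ≤ x) :
    IntegrableOn (fun s : ℝ => Real.exp (-(x * s) - s ^ 2 / 2)) (Set.Ioi 0) := by
  refine Integrable.mono' (intG.integrableOn) ?_ ?_
  · exact (Continuous.aestronglyMeasurable (by fun_prop)).restrict
  · filter_upwards [ae_restrict_mem measurableSet_Ioi] with s hs
    rw [Real.norm_eq_abs, abs_of_pos (Real.exp_pos _)]
    apply Real.exp_le_exp.2
    have : 0 ≤ x * s := mul_nonneg hx (le_of_lt hs)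
    linarith

lemma J_lower {x : ℝ} (hx : 0 ≤ x) :
    1 / (1 + x) ≤ ∫ s in Set.Ioi (0:ℝ), Real.exp (-(x * s) - s ^ 2 / 2) := by
  have h1x : (0:ℝ) < 1 + x := by linarith
  -- integrable lower comparison function
  have hint1 : IntegrableOn (fun s : ℝ => Real.exp (-((1 + x) * s))) (Set.Ioi 0) :=
    intOn_exp_neg_mul 0 h1x
  have hint2 : IntegrableOn
      (fun s : ℝ => Real.exp (-(2*x)) * (Real.exp (-s ^ 2 / 2) - Real.exp (-(1 * s))))
      (Set.Ioi 0) :=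
    (((intG.integrableOn).sub (intOn_exp_neg_mul 0 one_pos)).const_mul _)
  have hle : ∫ s in Set.Ioi (0:ℝ),
      (Real.exp (-((1 + x) * s)) + Real.exp (-(2*x)) * (Real.exp (-s ^ 2 / 2) - Real.exp (-(1 * s))))
        ≤ ∫ s in Set.Ioi (0:ℝ), Real.exp (-(x * s) - s ^ 2 / 2) := by
    apply setIntegral_mono_on (hint1.add hint2) (J_int hx) measurableSet_Ioi
    intro s hs
    have hs0 : (0:ℝ) < s := hs
    have key : Real.exp (-(2*x)) * (Real.exp (-s ^ 2 / 2) - Real.exp (-(1 * s)))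
        ≤ Real.exp (-(x*s)) * (Real.exp (-s ^ 2 / 2) - Real.exp (-(1 * s))) := by
      rcases le_total s 2 with h2 | h2
      · have hD : 0 ≤ Real.exp (-s ^ 2 / 2) - Real.exp (-(1 * s)) := by
          have : Real.exp (-(1*s)) ≤ Real.exp (-s ^ 2 / 2) := by
            apply Real.exp_le_exp.2; nlinarith
          linarith
        have : Real.exp (-(2*x)) ≤ Real.exp (-(x*s)) := by
          apply Real.exp_le_exp.2; nlinarith
        exact mul_le_mul_of_nonneg_right this hD
      · have hD : Real.exp (-s ^ 2 / 2) - Real.exp (-(1 * s)) ≤ 0 := by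
          have : Real.exp (-s ^ 2 / 2) ≤ Real.exp (-(1*s)) := by
            apply Real.exp_le_exp.2; nlinarith
          linarith
        have hE : Real.exp (-(x*s)) ≤ Real.exp (-(2*x)) := by
          apply Real.exp_le_exp.2; nlinarith
        exact mul_le_mul_of_nonpos_right hE hD
    calc Real.exp (-((1 + x) * s)) + Real.exp (-(2*x)) * (Real.exp (-s ^ 2 / 2) - Real.exp (-(1 * s)))
        ≤ Real.exp (-((1 + x) * s)) + Real.exp (-(x*s)) * (Real.exp (-s ^ 2 / 2) - Real.exp (-(1 * s))) := by
          linarith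
      _ = Real.exp (-(x * s) - s ^ 2 / 2) := by
          rw [mul_sub, ← Real.exp_add, ← Real.exp_add]
          ring_nf
  have heval : ∫ s in Set.Ioi (0:ℝ),
      (Real.exp (-((1 + x) * s)) + Real.exp (-(2*x)) * (Real.exp (-s ^ 2 / 2) - Real.exp (-(1 * s))))
      = 1 / (1 + x) + Real.exp (-(2*x)) * (Real.sqrt (2 * Real.pi) / 2 - 1) := by
    rw [integral_add hint1 hint2, int_exp_neg_mul h1x, integral_const_mul,
      integral_sub (intG.integrableOn) (intOn_exp_neg_mul 0 one_pos), gauss_half,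
      int_exp_neg_mul one_pos]
    norm_num
  have hpos : 0 ≤ Real.exp (-(2*x)) * (Real.sqrt (2 * Real.pi) / 2 - 1) := by
    apply mul_nonneg (Real.exp_pos _).le
    have hsq := Real.sq_sqrt (by positivity : (0:ℝ) ≤ 2 * Real.pi)
    have : (2:ℝ) ≤ Real.sqrt (2 * Real.pi) := by
      nlinarith [Real.sqrt_nonneg (2 * Real.pi), Real.pi_gt_three]
    linarith
  rw [heval] at hle
  linarith

lemma T_upper_low {x : ℝ} (hx : 0 ≤ x) (hx2 : x ≤ 1/2) :
    ∫ t in Set.Ioi x, Real.exp (-t ^ 2 / 2)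
      ≤ Real.sqrt 2 * Real.exp (-x ^ 2 / 2) / (1 + x) := by
  have h1x : (0:ℝ) < 1 + x := by linarith
  have hsplit : (∫ t in Set.Ioc (0:ℝ) x, Real.exp (-t ^ 2 / 2))
      + ∫ t in Set.Ioi x, Real.exp (-t ^ 2 / 2)
      = Real.sqrt (2 * Real.pi) / 2 := by
    rw [← gauss_half, ← setIntegral_union (Set.Ioc_disjoint_Ioi le_rfl) measurableSet_Ioi
      intG.integrableOn intG.integrableOn, Set.Ioc_union_Ioi_eq_Ioi hx]
  have hinit : x * Real.exp (-x ^ 2 / 2) ≤ ∫ t in Set.Ioc (0:ℝ) x, Real.exp (-t ^ 2 / 2) := by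
    have hconst : ∫ _t in Set.Ioc (0:ℝ) x, Real.exp (-x ^ 2 / 2) = x * Real.exp (-x ^ 2 / 2) := by
      rw [setIntegral_const]
      simp [Real.volume_Ioc, ENNReal.toReal_ofReal hx, hx]
    rw [← hconst]
    apply setIntegral_mono_on (integrableOn_const measure_Ioc_lt_top.ne)
      intG.integrableOn measurableSet_Ioc
    intro t ht
    apply Real.exp_le_exp.2
    have h1 : 0 < t := ht.1
    have h2 : t ≤ x := ht.2
    nlinarith
  have hT : ∫ t in Set.Ioi x, Real.exp (-t ^ 2 / 2)
      ≤ Real.sqrt (2 * Real.pi) / 2 - x * Real.exp (-x ^ 2 / 2) := by linarith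
  have hpi : Real.sqrt (2 * Real.pi) ≤ 2.51 := by
    have hsq := Real.sq_sqrt (by positivity : (0:ℝ) ≤ 2 * Real.pi)
    nlinarith [Real.sqrt_nonneg (2 * Real.pi), Real.pi_lt_d2]
  have hs2 : (1.414:ℝ) ≤ Real.sqrt 2 := by
    have hsq := Real.sq_sqrt (by norm_num : (0:ℝ) ≤ 2)
    nlinarith [Real.sqrt_nonneg 2]
  have hE1 : 1 - x ^ 2 / 2 ≤ Real.exp (-x ^ 2 / 2) := by
    have := Real.add_one_le_exp (-x ^ 2 / 2); linarith
  have hEpos : (0:ℝ) < Real.exp (-x ^ 2 / 2) := Real.exp_pos _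
  rw [le_div_iff₀ h1x]
  set E := Real.exp (-x ^ 2 / 2)
  set S := Real.sqrt (2 * Real.pi)
  have key : (1.255:ℝ) * (1+x) - x * (1 - x^2/2) * (1+x) ≤ 1.414 * (1 - x^2/2) := by
    nlinarith [mul_nonneg hx (sub_nonneg.2 hx2), mul_nonneg (mul_nonneg hx hx) (sub_nonneg.2 hx2),
      mul_nonneg (mul_nonneg (mul_nonneg hx hx) hx) (sub_nonneg.2 hx2), sq_nonneg x]
  calc (∫ t in Set.Ioi x, Real.exp (-t ^ 2 / 2)) * (1 + x)
      ≤ (S / 2 - x * E) * (1 + x) := by nlinarith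
    _ ≤ (1.255:ℝ) * (1+x) - x * (1 - x^2/2) * (1+x) := by
        nlinarith [mul_nonneg (mul_nonneg hx (sub_nonneg.2 (by nlinarith : x^2/2 ≤ (1:ℝ)))) h1x.le,
          mul_nonneg hx h1x.le]
    _ ≤ 1.414 * (1 - x^2/2) := key
    _ ≤ Real.sqrt 2 * E := by nlinarith

lemma J_upper_high {x : ℝ} (hx : 2 ≤ x) :
    ∫ s in Set.Ioi (0:ℝ), Real.exp (-(x * s) - s ^ 2 / 2) ≤ Real.sqrt 2 / (1 + x) := by
  have hx0 : (0:ℝ) ≤ x := by linarith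
  have hb : (0:ℝ) < x + 3/5 := by linarith
  have h1 : ∫ s in Set.Ioi (0:ℝ), Real.exp (-(x * s) - s ^ 2 / 2)
      ≤ ∫ s in Set.Ioi (0:ℝ), Real.exp (9/50) * Real.exp (-((x + 3/5) * s)) := by
    apply setIntegral_mono_on (J_int hx0) ((intOn_exp_neg_mul 0 hb).const_mul _) measurableSet_Ioi
    intro s hs
    have hs0 : (0:ℝ) < s := hs
    rw [← Real.exp_add]
    apply Real.exp_le_exp.2
    nlinarith [sq_nonneg (s - 3/5)]
  rw [integral_const_mul, int_exp_neg_mul hb] at h1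
  have h2 : Real.exp (9/50) * (1 / (x + 3/5)) ≤ Real.sqrt 2 / (1 + x) := by
    have hE : Real.exp (9/50) ≤ 50/41 := by
      have h := Real.add_one_le_exp (-(9/50:ℝ))
      have hp : (0:ℝ) < Real.exp (-(9/50:ℝ)) := Real.exp_pos _
      have : Real.exp (9/50:ℝ) * Real.exp (-(9/50:ℝ)) = 1 := by
        rw [← Real.exp_add]; norm_num
      nlinarith [Real.exp_pos (9/50:ℝ)]
    have hs2 : (1.414:ℝ) ≤ Real.sqrt 2 := by
      have hsq := Real.sq_sqrt (by norm_num : (0:ℝ) ≤ 2)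
      nlinarith [Real.sqrt_nonneg 2]
    rw [mul_one_div, div_le_div_iff₀ hb (by linarith : (0:ℝ) < 1 + x)]
    calc Real.exp (9/50) * (1 + x) ≤ 50/41 * (1 + x) := by nlinarith
      _ ≤ 1.414 * (x + 3/5) := by nlinarith
      _ ≤ Real.sqrt 2 * (x + 3/5) := by nlinarith
  calc _ ≤ Real.exp (9/50) * (1 / (x + 3/5)) := h1
    _ ≤ _ := h2

lemma J_upper_mid {x : ℝ} (hx1 : 1/2 ≤ x) (hx2 : x ≤ 2) :
    ∫ s in Set.Ioi (0:ℝ), Real.exp (-(x * s) - s ^ 2 / 2) ≤ Real.sqrt 2 / (1 + x) := by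
  have hx0 : (0:ℝ) < x := by linarith
  have h1x : (0:ℝ) < 1 + x := by linarith
  set p := Real.sqrt Real.pi with hpdef
  have hppos : 0 < p := Real.sqrt_pos.2 Real.pi_pos
  have hpsq : p ^ 2 = Real.pi := Real.sq_sqrt Real.pi_pos.le
  have hp175 : p ≤ 1.775 := by nlinarith [Real.pi_lt_d2]
  set l := Real.sqrt (x * p) with hldef
  have hlpos : 0 < l := Real.sqrt_pos.2 (by positivity)
  have hlsq : l ^ 2 = x * p := Real.sq_sqrt (by positivity)
  -- pointwise AM-GM
  have hpt : ∀ s ∈ Set.Ioi (0:ℝ), Real.exp (-(x * s) - s ^ 2 / 2)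
      ≤ l / 2 * Real.exp (-(2 * x * s)) + 1 / (2 * l) * Real.exp (-s ^ 2) := by
    intro s _
    have ha : Real.exp (-(x * s) - s ^ 2 / 2)
        = Real.exp (-(x * s)) * Real.exp (-s ^ 2 / 2) := by
      rw [← Real.exp_add]; ring_nf
    have ha2 : Real.exp (-(x * s)) ^ 2 = Real.exp (-(2 * x * s)) := by
      rw [← Real.exp_nat_mul]; ring_nf
    have hb2 : Real.exp (-s ^ 2 / 2) ^ 2 = Real.exp (-s ^ 2) := by
      rw [← Real.exp_nat_mul]; ring_nf
    set a := Real.exp (-(x * s))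
    set b := Real.exp (-s ^ 2 / 2)
    rw [ha, ← ha2, ← hb2]
    have hkey : 2 * l * (a * b) ≤ 2 * l * (l / 2 * a ^ 2 + 1 / (2 * l) * b ^ 2) := by
      have he : 2 * l * (l / 2 * a ^ 2 + 1 / (2 * l) * b ^ 2) = l ^ 2 * a ^ 2 + b ^ 2 := by
        field_simp
      rw [he]; nlinarith [sq_nonneg (l * a - b)]
    exact (mul_le_mul_iff_right₀ (by positivity : (0:ℝ) < 2 * l)).1 hkey
  -- integrate
  have hint1 : IntegrableOn (fun s : ℝ => l / 2 * Real.exp (-(2 * x * s))) (Set.Ioi 0) :=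
    (intOn_exp_neg_mul 0 (by linarith)).const_mul _
  have hint2 : IntegrableOn (fun s : ℝ => 1 / (2 * l) * Real.exp (-s ^ 2)) (Set.Ioi 0) :=
    (intG1.integrableOn).const_mul _
  have hle : ∫ s in Set.Ioi (0:ℝ), Real.exp (-(x * s) - s ^ 2 / 2)
      ≤ ∫ s in Set.Ioi (0:ℝ),
        (l / 2 * Real.exp (-(2 * x * s)) + 1 / (2 * l) * Real.exp (-s ^ 2)) :=
    setIntegral_mono_on (J_int hx0.le) (hint1.add hint2) measurableSet_Ioi hpt
  rw [integral_add hint1 hint2, integral_const_mul, integral_const_mul,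
    int_exp_neg_mul (by linarith : (0:ℝ) < 2 * x), gauss_one] at hle
  have hval : l / 2 * (1 / (2 * x)) + 1 / (2 * l) * (p / 2) = p / (2 * l) := by
    field_simp
    nlinarith [hlsq]
  rw [hval] at hle
  -- final numeric comparison : p / (2 l) ≤ √2 / (1+x)
  have hs2 : (0:ℝ) ≤ Real.sqrt 2 := Real.sqrt_nonneg 2
  have h8 : p * (1 + x) ^ 2 ≤ 8 * x := by
    nlinarith [mul_nonneg (by linarith : (0:ℝ) ≤ x - 1/2) (by linarith : (0:ℝ) ≤ 2 - x),
      mul_le_mul_of_nonneg_right hp175 (sq_nonneg (1 + x))]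
  have hsqcmp : (p * (1 + x)) ^ 2 ≤ (2 * Real.sqrt 2 * l) ^ 2 := by
    have h2 : (2 * Real.sqrt 2 * l) ^ 2 = 8 * (x * p) := by
      rw [mul_pow, mul_pow, Real.sq_sqrt (by norm_num : (0:ℝ) ≤ 2), hlsq]; ring
    rw [h2]
    nlinarith [mul_le_mul_of_nonneg_left h8 hppos.le]
  have hfin : p * (1 + x) ≤ 2 * Real.sqrt 2 * l := by
    have h := Real.sqrt_le_sqrt hsqcmp
    rwa [Real.sqrt_sq (by positivity), Real.sqrt_sq (by positivity)] at h
  have : p / (2 * l) ≤ Real.sqrt 2 / (1 + x) := by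
    rw [div_le_div_iff₀ (by positivity) h1x]
    nlinarith [hfin]
  linarith


lemma T_lower {x : ℝ} (hx : 0 ≤ x) :
    Real.exp (-x ^ 2 / 2) / (1 + x) ≤ ∫ t in Set.Ioi x, Real.exp (-t ^ 2 / 2) := by
  rw [T_eq, div_eq_mul_one_div]
  exact mul_le_mul_of_nonneg_left (J_lower hx) (Real.exp_pos _).le

lemma T_upper {x : ℝ} (hx : 0 ≤ x) :
    (∫ t in Set.Ioi x, Real.exp (-t ^ 2 / 2))
      ≤ Real.sqrt 2 * Real.exp (-x ^ 2 / 2) / (1 + x) := by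
  rcases le_total x (1/2) with h | h
  · exact T_upper_low hx h
  · have key : ∫ s in Set.Ioi (0:ℝ), Real.exp (-(x * s) - s ^ 2 / 2)
        ≤ Real.sqrt 2 / (1 + x) := by
      rcases le_total x 2 with h2 | h2
      · exact J_upper_mid h h2
      · exact J_upper_high h2
    rw [T_eq]
    calc Real.exp (-x ^ 2 / 2) * ∫ s in Set.Ioi (0:ℝ), Real.exp (-(x * s) - s ^ 2 / 2)
        ≤ Real.exp (-x ^ 2 / 2) * (Real.sqrt 2 / (1 + x)) :=
          mul_le_mul_of_nonneg_left key (Real.exp_pos _).le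
      _ = Real.sqrt 2 * Real.exp (-x ^ 2 / 2) / (1 + x) := by ring

end StdNormalTail

/-- Standard normal tail bounds: for all `x ≥ 0`,
`e^{−x²/2}/(√(2π)(1+x)) ≤ 1 − Φ(x) ≤ e^{−x²/2}/(√π(1+x))`. -/
theorem stmt11 (x : ℝ) (hx : 0 ≤ x) :
    1 / (Real.sqrt (2 * Real.pi) * (1 + x)) * Real.exp (-x ^ 2 / 2) ≤
        1 - stdNormalCDF x ∧
      1 - stdNormalCDF x ≤
        1 / (Real.sqrt Real.pi * (1 + x)) * Real.exp (-x ^ 2 / 2) := by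
  open StdNormalTail in
  have h1x : (0:ℝ) < 1 + x := by linarith
  have hS : (0:ℝ) < Real.sqrt (2 * Real.pi) := Real.sqrt_pos.2 (by positivity)
  set S := Real.sqrt (2 * Real.pi) with hSdef
  set T := ∫ t in Set.Ioi x, Real.exp (-t ^ 2 / 2) with hTdef
  have hcdf : 1 - stdNormalCDF x = T / S := by
    have h1 : stdNormalCDF x = (∫ t in Set.Iic x, Real.exp (-t ^ 2 / 2)) / S := by
      rw [stdNormalCDF, integral_div]
    have h2 : (∫ t in Set.Iic x, Real.exp (-t ^ 2 / 2)) + T = S := by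
      rw [hTdef, intervalIntegral.integral_Iic_add_Ioi StdNormalTail.intG.integrableOn
        StdNormalTail.intG.integrableOn, StdNormalTail.gauss_total]
    rw [h1, eq_div_iff hS.ne', sub_mul, div_mul_cancel₀ _ hS.ne']
    linarith
  constructor
  · rw [hcdf]
    have hTl := StdNormalTail.T_lower hx
    calc 1 / (S * (1 + x)) * Real.exp (-x ^ 2 / 2)
        = (Real.exp (-x ^ 2 / 2) / (1 + x)) / S := by
          rw [div_div, mul_comm S (1 + x), one_div_mul_eq_div]
      _ ≤ T / S := by gcongr
  · rw [hcdf]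
    have hTu := StdNormalTail.T_upper hx
    have hsplit : S = Real.sqrt 2 * Real.sqrt Real.pi := Real.sqrt_mul (by norm_num) _
    have hP : (0:ℝ) < Real.sqrt Real.pi := Real.sqrt_pos.2 Real.pi_pos
    have h2 : (0:ℝ) < Real.sqrt 2 := Real.sqrt_pos.2 (by norm_num)
    calc T / S ≤ (Real.sqrt 2 * Real.exp (-x ^ 2 / 2) / (1 + x)) / S := by gcongr
      _ = 1 / (Real.sqrt Real.pi * (1 + x)) * Real.exp (-x ^ 2 / 2) := by
          rw [hsplit]
          field_simp
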